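/- If p, q are elements of a monoid M with pq = 1 and qp ≠ 1, then the submonoid of M generated by {p, q} is isomorphic to the bicyclic monoid Mon⟨b, c | bc = 1⟩ (via b ↦ p, c ↦ q). -/

import Mathlib

/-- The defining congruence of the bicyclic monoid `B = Mon⟨b, c | bc = 1⟩`, on the free
monoid over `Bool` with `true` playing the role of `b` and `false` that of `c`. -/
def bicyclicCon : Con (FreeMonoid Bool) :=
  conGen (fun x y => x = FreeMonoid.ofList [true, false] ∧ y = 1)

section aux

variable {M : Type*} [Monoid M] {p q : M}

lemma pq_pow (hpq : p * q = 1) : ∀ n : ℕ, p ^ n * q ^ n = 1 := by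
  intro n
  induction n with
  | zero => simp
  | succ m ih =>
    rw [pow_succ' p, pow_succ q, mul_assoc, ← mul_assoc (p ^ m), ih, one_mul, hpq]

lemma pq_tr1 (hpq : p * q = 1) {m n : ℕ} (h : n ≤ m) : p ^ m * q ^ n = p ^ (m - n) := by
  have hm : p ^ m = p ^ (m - n) * p ^ n := by rw [← pow_add]; congr 1; omega
  rw [hm, mul_assoc, pq_pow hpq, mul_one]

lemma pq_tr2 (hpq : p * q = 1) {m n : ℕ} (h : n ≤ m) : p ^ n * q ^ m = q ^ (m - n) := by
  have hm : q ^ m = q ^ n * q ^ (m - n) := by rw [← pow_add]; congr 1; omega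
  rw [hm, ← mul_assoc, pq_pow hpq, one_mul]

lemma p_pow_ne (hpq : p * q = 1) (hqp : q * p ≠ 1) {n : ℕ} (h : p ^ n = 1) : n = 0 := by
  by_contra hn
  obtain ⟨m, rfl⟩ := Nat.exists_eq_succ_of_ne_zero hn
  have hq : p ^ m = q := by
    have := congrArg (· * q) h
    simpa [pow_succ, mul_assoc, hpq] using this
  exact hqp (by rw [← hq, ← pow_succ, h])

lemma q_pow_ne (hpq : p * q = 1) (hqp : q * p ≠ 1) {n : ℕ} (h : q ^ n = 1) : n = 0 := by
  by_contra hn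
  obtain ⟨m, rfl⟩ := Nat.exists_eq_succ_of_ne_zero hn
  have hp : q ^ m = p := by
    have := congrArg (p * ·) h
    simpa [pow_succ', ← mul_assoc, hpq] using this
  exact hqp (by rw [← hp, ← pow_succ', h])

lemma qp_pow_ne (hpq : p * q = 1) (hqp : q * p ≠ 1) {a b : ℕ} (ha : a ≠ 0)
    (h : q ^ a * p ^ b = 1) : False := by
  obtain ⟨m, rfl⟩ := Nat.exists_eq_succ_of_ne_zero ha
  -- left-multiply by p ^ (m+1)
  have h1 : p ^ b = p ^ (m + 1) := by
    have := congrArg (p ^ (m + 1) * ·) h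
    simpa [← mul_assoc, pq_pow hpq] using this
  have h2 : q ^ (m + 1) * p ^ (m + 1) = 1 := by rw [← h1, h]
  apply hqp
  have e1 : p ^ m * q ^ (m + 1) = q := by
    rw [pq_tr2 hpq (Nat.le_succ m)]; simp
  have e2 : p ^ (m + 1) * q ^ m = p := by
    rw [pq_tr1 hpq (Nat.le_succ m)]; simp
  calc q * p = (p ^ m * q ^ (m + 1)) * (p ^ (m + 1) * q ^ m) := by rw [e1, e2]
  _ = p ^ m * (q ^ (m + 1) * p ^ (m + 1)) * q ^ m := by simp [mul_assoc]
  _ = 1 := by rw [h2, mul_one, pq_pow hpq]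

/-- Key cancellation: the elements `q ^ i * p ^ j` are pairwise distinct. -/
lemma exp_inj (hpq : p * q = 1) (hqp : q * p ≠ 1) {i j k l : ℕ}
    (h : q ^ i * p ^ j = q ^ k * p ^ l) : i = k ∧ j = l := by
  have main : ∀ i j k l : ℕ, i ≤ k → q ^ i * p ^ j = q ^ k * p ^ l → i = k ∧ j ≤ l := by
    intro i j k l hik h
    have h1 : p ^ j = q ^ (k - i) * p ^ l := by
      have := congrArg (p ^ i * ·) h
      simp only [← mul_assoc, pq_pow hpq, one_mul, pq_tr2 hpq hik] at this
      exact this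
    constructor
    · by_contra hne
      have hki : k - i ≠ 0 := fun h0 => hne (le_antisymm hik (Nat.le_of_sub_eq_zero h0))
      rcases le_or_gt j l with hjl | hlj
      · have h2 : q ^ (k - i) * p ^ (l - j) = 1 := by
          have := congrArg (· * q ^ j) h1
          simp only [pq_pow hpq, mul_assoc, pq_tr1 hpq hjl] at this
          exact this.symm
        exact qp_pow_ne hpq hqp hki h2
      · have h2 : q ^ (k - i + (j - l)) = 1 := by
          have := congrArg (· * q ^ j) h1
          simp only [pq_pow hpq, mul_assoc, pq_tr2 hpq hlj.le, ← pow_add] at this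
          exact this.symm
        have := q_pow_ne hpq hqp h2
        omega
    · by_contra hlj
      push_neg at hlj
      have h2 : p ^ (j - l) = q ^ (k - i) := by
        have := congrArg (· * q ^ l) h1
        simp only [mul_assoc, pq_pow hpq, mul_one, pq_tr1 hpq hlj.le] at this
        exact this
      have h3 : q ^ (k - i + (j - l)) = 1 := by
        rw [pow_add, ← h2, pq_pow hpq]
      have := q_pow_ne hpq hqp h3
      omega
  rcases le_or_gt i k with hik | hki
  · obtain ⟨hik', hjl⟩ := main i j k l hik h
    obtain ⟨_, hlj⟩ := main k l i j hik'.ge h.symm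
    exact ⟨hik', le_antisymm hjl hlj⟩
  · obtain ⟨hik', hjl⟩ := main k l i j hki.le h.symm
    obtain ⟨_, hlj⟩ := main i j k l hik'.ge h
    exact ⟨hik'.symm, le_antisymm hlj hjl⟩

end aux

/-- If `p, q` are elements of a monoid `M` with `pq = 1` and `qp ≠ 1`, then the submonoid
of `M` generated by `{p, q}` is isomorphic to the bicyclic monoid `Mon⟨b, c | bc = 1⟩`
(via `b ↦ p`, `c ↦ q`): the monoid homomorphism from the bicyclic monoid sending `b` to
`p` and `c` to `q` is injective, and its range is the submonoid generated by `p` and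
`q`. -/
theorem bicyclic_of_one_sided_inverse {M : Type*} [Monoid M] (p q : M)
    (hpq : p * q = 1) (hqp : q * p ≠ 1) :
    ∃ f : bicyclicCon.Quotient →* M, Function.Injective f ∧
      f (bicyclicCon.mk' (FreeMonoid.ofList [true])) = p ∧
      f (bicyclicCon.mk' (FreeMonoid.ofList [false])) = q ∧
      MonoidHom.mrange f = Submonoid.closure {p, q} := by
  set φ : FreeMonoid Bool →* M := FreeMonoid.lift (fun x => if x then p else q) with hφ
  have hle : bicyclicCon ≤ Con.ker φ := by
    apply Con.conGen_le.mpr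
    rintro x y ⟨rfl, rfl⟩
    rw [Con.ker_rel]
    show φ (FreeMonoid.of true * FreeMonoid.of false) = φ 1
    simp [hφ, hpq]
  set f := bicyclicCon.lift φ hle with hf
  set bb : bicyclicCon.Quotient := bicyclicCon.mk' (FreeMonoid.of true) with hbb
  set cc : bicyclicCon.Quotient := bicyclicCon.mk' (FreeMonoid.of false) with hcc
  have hrel : bicyclicCon (FreeMonoid.of true * FreeMonoid.of false) 1 :=
    ConGen.Rel.of _ _ ⟨rfl, rfl⟩
  have hbc : bb * cc = 1 := by
    rw [hbb, hcc, ← map_mul, ← map_one bicyclicCon.mk']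
    exact (Con.eq _).mpr hrel
  have hfb : f bb = p := by simp [hf, hbb, hφ]
  have hfc : f cc = q := by simp [hf, hcc, hφ]
  have hnf : ∀ x : bicyclicCon.Quotient, ∃ i j : ℕ, x = cc ^ i * bb ^ j := by
    intro x
    refine Con.induction_on x ?_
    intro w
    induction w using FreeMonoid.recOn with
    | one => exact ⟨0, 0, by simp⟩
    | of_mul a t iht =>
      obtain ⟨i, j, hij⟩ := iht
      have hcoe : (↑(FreeMonoid.of a * t) : bicyclicCon.Quotient)
          = ↑(FreeMonoid.of a) * ↑t := rfl
      rw [hcoe, hij]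
      cases a with
      | false =>
        refine ⟨i + 1, j, ?_⟩
        show cc * (cc ^ i * bb ^ j) = cc ^ (i + 1) * bb ^ j
        rw [pow_succ']
        exact (mul_assoc cc (cc ^ i) (bb ^ j)).symm
      | true =>
        cases i with
        | zero =>
          refine ⟨0, j + 1, ?_⟩
          show bb * (cc ^ 0 * bb ^ j) = cc ^ 0 * bb ^ (j + 1)
          simp [pow_succ']
        | succ m =>
          refine ⟨m, j, ?_⟩
          show bb * (cc ^ (m + 1) * bb ^ j) = cc ^ m * bb ^ j
          rw [pow_succ' cc m, mul_assoc cc, ← mul_assoc bb, hbc, one_mul]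
  have hval : ∀ i j : ℕ, f (cc ^ i * bb ^ j) = q ^ i * p ^ j := by
    intro i j; rw [map_mul, map_pow, map_pow, hfb, hfc]
  refine ⟨f, ?_, hfb, hfc, ?_⟩
  · intro x y hxy
    obtain ⟨i, j, rfl⟩ := hnf x
    obtain ⟨k, l, rfl⟩ := hnf y
    rw [hval, hval] at hxy
    obtain ⟨rfl, rfl⟩ := exp_inj hpq hqp hxy
    rfl
  · apply le_antisymm
    · rintro _ ⟨x, rfl⟩
      obtain ⟨i, j, rfl⟩ := hnf x
      rw [hval]
      have hp : p ∈ Submonoid.closure ({p, q} : Set M) :=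
        Submonoid.subset_closure (by simp)
      have hq : q ∈ Submonoid.closure ({p, q} : Set M) :=
        Submonoid.subset_closure (by simp)
      exact mul_mem (pow_mem hq i) (pow_mem hp j)
    · rw [Submonoid.closure_le]
      rintro x (rfl | rfl)
      · exact ⟨bb, hfb⟩
      · exact ⟨cc, hfc⟩
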